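/- There exists an absolute constant γ > 0 such that for every n > 2, the 2-dimensional hyperbolic cross Γ(γ·b_n, 2) intersects L(n) \ {0} in the empty set, where b_n is the n-th Fibonacci number and L(n) = {k = (k_1,k_2) ∈ ℤ² : k_1 + b_{n−1}·k_2 ≡ 0 (mod b_n)}. -/

import Mathlib

open MeasureTheory Real

noncomputable section

/-- The univariate smooth hat function `h^r_u`. -/
def hFun (u : ℝ) : ℕ → ℝ → ℝ
  | 0 => fun _ => 0
  | 1 => fun x => Set.indicator (Set.Ico (-(u / 2)) (u / 2)) (fun _ => (1 : ℝ)) x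
  | (r + 2) => fun x => ∫ y : ℝ, hFun u (r + 1) (x - y) * hFun u 1 y

/-- The multivariate function `h^r_B` for the box with center `z` and parameter vector `u`. -/
def hBox (d r : ℕ) (z u : Fin d → ℝ) (x : Fin d → ℝ) : ℝ :=
  ∏ j, hFun (u j) r (x j - z j)

/-- The box `B = ∏_j [z_j - r u_j/2, z_j + r u_j/2)`. -/
def boxSet (d r : ℕ) (z u : Fin d → ℝ) : Set (Fin d → ℝ) :=
  Set.univ.pi fun j => Set.Ico (z j - r * u j / 2) (z j + r * u j / 2)

/-- The unit cube `[0,1)^d`. -/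
def unitCube (d : ℕ) : Set (Fin d → ℝ) :=
  Set.univ.pi fun _ => Set.Ico (0 : ℝ) 1

/-- Periodization of a multivariate function over `ℤ^d`. -/
def periodize (d : ℕ) (f : (Fin d → ℝ) → ℝ) (x : Fin d → ℝ) : ℝ :=
  ∑' m : Fin d → ℤ, f fun j => (m j : ℝ) + x j

/-- The error of the equal-weight cubature with nodes `ξ 1, …, ξ m` applied to the
periodization of `h^r_B` shifted by `z`. -/
def errFun (d r m : ℕ) (ξ : ℕ → Fin d → ℝ) (zB u : Fin d → ℝ) (z : Fin d → ℝ) : ℝ :=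
  (∫ x in unitCube d, periodize d (hBox d r zB u) fun j => x j - z j) -
    (m : ℝ)⁻¹ * ∑ μ ∈ Finset.Icc 1 m, periodize d (hBox d r zB u) fun j => ξ μ j - z j

/-- The hyperbolic cross `Γ(N,d)`. -/
def hyperbolicCross (d : ℕ) (N : ℝ) : Set (Fin d → ℤ) :=
  {k | (∏ j, max |(k j : ℝ)| 1) ≤ N}

/-- The exponential `e^{2πi(k,x)}`. -/
def expFun (d : ℕ) (k : Fin d → ℤ) (x : Fin d → ℝ) : ℂ :=
  Complex.exp (2 * Real.pi * Complex.I * ∑ j, (k j : ℂ) * (x j : ℂ))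

/-- The space `T(N,d)` of trigonometric polynomials with frequencies in `Γ(N,d)`. -/
def TSpace (d : ℕ) (N : ℝ) : Submodule ℂ ((Fin d → ℝ) → ℂ) :=
  Submodule.span ℂ (expFun d '' hyperbolicCross d N)

/-- The nodes `y^μ` of the Korobov cubature formula `P_m(·,a)`. -/
def korobovNode (d m : ℕ) (a : Fin d → ℤ) (μ : ℕ) : Fin d → ℝ :=
  fun j => Int.fract ((μ : ℝ) * (a j : ℝ) / (m : ℝ))

/-- The Korobov cubature formula `P_m(f,a)`. -/
def korobovSum (d m : ℕ) (a : Fin d → ℤ) (f : (Fin d → ℝ) → ℂ) : ℂ :=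
  (m : ℂ)⁻¹ * ∑ μ ∈ Finset.Icc 1 m, f (korobovNode d m a μ)

/-- Exactness of the Korobov cubature formula on `T(N,d)`. -/
def IsExact (d m : ℕ) (a : Fin d → ℤ) (N : ℝ) : Prop :=
  ∀ f ∈ TSpace d N, korobovSum d m a f = ∫ x in unitCube d, f x

/-- The Fibonacci numbers with `b 0 = b 1 = 1`. -/
def fibb : ℕ → ℕ
  | 0 => 1
  | 1 => 1
  | (n + 2) => fibb (n + 1) + fibb n

/-- The points of the Fibonacci point set `𝓕_n`. -/
def fibNode (n : ℕ) (μ : ℕ) : Fin 2 → ℝ :=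
  ![(μ : ℝ) / (fibb n : ℝ), Int.fract ((μ : ℝ) * (fibb (n - 1) : ℝ) / (fibb n : ℝ))]


section FibAux
open goldenRatio

lemma fibb_eq (m : ℕ) : fibb m = Nat.fib (m + 1) := by
  induction m using Nat.twoStepInduction with
  | zero => rfl
  | one => rfl
  | more m ih1 ih2 =>
    show fibb (m+1) + fibb m = _
    rw [ih2, ih1]
    have h1 := Nat.fib_add_two (n := m+1)
    show Nat.fib (m+1+1) + Nat.fib (m+1) = Nat.fib (m+1+2)
    omega

lemma one_le_fibb (m : ℕ) : 1 ≤ fibb m := by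
  rw [fibb_eq]; exact Nat.fib_pos.2 (Nat.succ_pos m)

lemma fibb_golden (m : ℕ) : (fibb m : ℝ) * φ = (fibb (m + 1) : ℝ) - ψ ^ (m + 1) := by
  rw [fibb_eq, fibb_eq]
  have := fib_succ_sub_goldenRatio_mul_fib (m + 1)
  push_cast at this ⊢
  linarith [this]

lemma fibb_le (m : ℕ) : (fibb m : ℝ) ≤ 2 * φ ^ m := by
  induction m using Nat.twoStepInduction with
  | zero => norm_num [fibb]
  | one => show ((1:ℕ):ℝ) ≤ 2 * φ ^ 1; push_cast; nlinarith [one_lt_goldenRatio]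
  | more m ih1 ih2 =>
    show ((fibb (m+1) + fibb m : ℕ) : ℝ) ≤ 2 * φ ^ (m + 2)
    push_cast
    have h : φ ^ (m + 2) = φ ^ m * (φ + 1) := by rw [← goldenRatio_sq]; ring
    rw [h]
    have h1 : (fibb (m+1) : ℝ) ≤ 2 * φ ^ (m+1) := ih2
    have h2 : φ ^ (m+1) = φ ^ m * φ := by ring
    nlinarith [ih1, pow_pos goldenRatio_pos m]

lemma quad_ne (t k : ℤ) (ht : t ≠ 0) : (k : ℝ) ^ 2 - t * k - t ^ 2 ≠ 0 := by
  intro h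
  have h5 : Irrational (√5) := by
    have hp : Nat.Prime 5 := by norm_num
    simpa using hp.irrational_sqrt
  have ht' : (t : ℝ) ≠ 0 := Int.cast_ne_zero.2 ht
  set r : ℝ := ((2 * k - t : ℤ) : ℝ) / (t : ℝ) with hr
  have hr2 : r ^ 2 = 5 := by
    rw [hr, div_pow]; rw [div_eq_iff (by positivity)]; push_cast; nlinarith
  have hs : √5 = |r| := by
    rw [show (5:ℝ) = |r| ^ 2 by rw [sq_abs, hr2]]
    exact Real.sqrt_sq (abs_nonneg r)
  exact h5 ⟨|(2 * (k:ℚ) - t)| / |(t:ℚ)|, by rw [hs, hr]; push_cast; rw [abs_div]⟩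

lemma fibb_le_succ (m : ℕ) : fibb m ≤ fibb (m + 1) := by
  rw [fibb_eq, fibb_eq]; exact Nat.fib_mono (by omega)

lemma fibb_cop (m : ℕ) : Nat.Coprime (fibb m) (fibb (m + 1)) := by
  rw [fibb_eq, fibb_eq]; exact Nat.fib_coprime_fib_succ (m + 1)


end FibAux

open goldenRatio in
set_option maxHeartbeats 1200000 in
/-- Lemma FL.1: there is an absolute `γ > 0` such that the hyperbolic cross `Γ(γ b_n, 2)`
intersects `L(n) \\ {0}` trivially: any `(k₁,k₂)` with `max(|k₁|,1)·max(|k₂|,1) ≤ γ b_n`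
and `k₁ + b_{n-1} k₂ ≡ 0 (mod b_n)` must be zero. -/
theorem fibonacci_hyperbolic_cross_empty :
    ∃ γ : ℝ, 0 < γ ∧
      ∀ n : ℕ, 2 < n → ∀ k₁ k₂ : ℤ,
        ((max |k₁| 1 * max |k₂| 1 : ℤ) : ℝ) ≤ γ * fibb n →
        (fibb n : ℤ) ∣ (k₁ + (fibb (n - 1) : ℤ) * k₂) →
        k₁ = 0 ∧ k₂ = 0 := by
  refine ⟨1/10, by norm_num, ?_⟩
  intro n hn k₁ k₂ hcross hdvd
  obtain ⟨m, rfl⟩ : ∃ m, n = m + 3 := ⟨n - 3, by omega⟩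
  have hsub : m + 3 - 1 = m + 2 := by omega
  rw [hsub] at hdvd
  set a : ℕ := fibb (m + 2) with ha
  set b : ℕ := fibb (m + 3) with hb
  have hbR : (1 : ℝ) ≤ (b : ℝ) := by exact_mod_cast one_le_fibb (m + 3)
  have haR : (1 : ℝ) ≤ (a : ℝ) := by exact_mod_cast one_le_fibb (m + 2)
  have hab : (a : ℝ) ≤ b := by exact_mod_cast fibb_le_succ (m + 2)
  have hba : (b : ℝ) ≤ 2 * a := by
    have h1 : b = a + fibb (m + 1) := rfl
    have h2 : fibb (m + 1) ≤ a := fibb_le_succ (m + 1)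
    have : (b : ℕ) ≤ 2 * a := by omega
    exact_mod_cast this
  have hX1 : (1 : ℤ) ≤ max |k₁| 1 := le_max_right _ _
  have hY1 : (1 : ℤ) ≤ max |k₂| 1 := le_max_right _ _
  have hXR : (1 : ℝ) ≤ ((max |k₁| 1 : ℤ) : ℝ) := by exact_mod_cast hX1
  have hYR : (1 : ℝ) ≤ ((max |k₂| 1 : ℤ) : ℝ) := by exact_mod_cast hY1
  have hcross' : ((max |k₁| 1 : ℤ) : ℝ) * ((max |k₂| 1 : ℤ) : ℝ) ≤ (b : ℝ) / 10 := by
    push_cast at hcross ⊢; linarith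
  have hXb : ((max |k₁| 1 : ℤ) : ℝ) ≤ (b : ℝ) / 10 := by nlinarith
  have hYb : ((max |k₂| 1 : ℤ) : ℝ) ≤ (b : ℝ) / 10 := by nlinarith
  have hk1b : |(k₁ : ℝ)| ≤ (b : ℝ) / 10 := by
    refine le_trans ?_ hXb
    rw [← Int.cast_abs]
    exact_mod_cast le_max_left |k₁| 1
  have hk2b : |(k₂ : ℝ)| ≤ (b : ℝ) / 10 := by
    refine le_trans ?_ hYb
    rw [← Int.cast_abs]
    exact_mod_cast le_max_left |k₂| 1
  have hk2 : k₂ = 0 := by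
    by_contra hk2
    have hk2' : (1 : ℤ) ≤ |k₂| := Int.one_le_abs (by simpa using hk2)
    have hk2R : (1 : ℝ) ≤ |(k₂ : ℝ)| := by rw [← Int.cast_abs]; exact_mod_cast hk2'
    have hk1 : k₁ ≠ 0 := by
      rintro rfl
      rw [zero_add] at hdvd
      have hcop : IsCoprime (b : ℤ) (a : ℤ) := by
        rw [Int.isCoprime_iff_gcd_eq_one]
        exact_mod_cast (fibb_cop (m + 2)).symm
      have hdk : (b : ℤ) ∣ k₂ := hcop.dvd_of_dvd_mul_left hdvd
      have h1 : (b : ℤ) ≤ |k₂| := Int.le_of_dvd (abs_pos.2 hk2) ((dvd_abs _ _).2 hdk)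
      have h2 : (b : ℝ) ≤ |(k₂ : ℝ)| := by rw [← Int.cast_abs]; exact_mod_cast h1
      linarith
    have hk1' : (1 : ℤ) ≤ |k₁| := Int.one_le_abs (by simpa using hk1)
    have hk1R : (1 : ℝ) ≤ |(k₁ : ℝ)| := by rw [← Int.cast_abs]; exact_mod_cast hk1'
    have hP : |(k₁ : ℝ)| * |(k₂ : ℝ)| ≤ (b : ℝ) / 10 := by
      have e1 : ((max |k₁| 1 : ℤ) : ℝ) = |(k₁ : ℝ)| := by
        rw [max_eq_left hk1', Int.cast_abs]
      have e2 : ((max |k₂| 1 : ℤ) : ℝ) = |(k₂ : ℝ)| := by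
        rw [max_eq_left hk2', Int.cast_abs]
      rw [e1, e2] at hcross'; exact hcross'
    obtain ⟨t, htt⟩ := hdvd
    have htR : (k₁ : ℝ) + (a : ℝ) * (k₂ : ℝ) = (b : ℝ) * (t : ℝ) := by
      exact_mod_cast congrArg (fun z : ℤ => (z : ℝ)) htt
    rcases eq_or_ne t 0 with rfl | ht0
    · -- t = 0 : k₁ = -a k₂, so |k₁| ≥ a ≥ b/2
      have hk1eq : (k₁ : ℝ) = -((a : ℝ) * (k₂ : ℝ)) := by push_cast at htR ⊢; linarith
      have hk1a : |(k₁ : ℝ)| = (a : ℝ) * |(k₂ : ℝ)| := by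
        rw [hk1eq, abs_neg, abs_mul, abs_of_nonneg (by positivity : (0:ℝ) ≤ (a:ℝ))]
      nlinarith
    · -- t ≠ 0
      have habs : |(t : ℝ)| ≤ |(k₂ : ℝ)| := by
        have h1 : |(t : ℝ)| * (b : ℝ) ≤ |(k₁ : ℝ)| + (a : ℝ) * |(k₂ : ℝ)| := by
          have e : |(t : ℝ)| * (b : ℝ) = |(k₁ : ℝ) + (a : ℝ) * (k₂ : ℝ)| := by
            rw [htR, abs_mul, abs_of_nonneg (by positivity : (0:ℝ) ≤ (b:ℝ))]; ring
          rw [e]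
          calc |(k₁ : ℝ) + (a : ℝ) * (k₂ : ℝ)| ≤ |(k₁ : ℝ)| + |(a : ℝ) * (k₂ : ℝ)| := abs_add_le _ _
            _ = |(k₁ : ℝ)| + (a : ℝ) * |(k₂ : ℝ)| := by
                rw [abs_mul, abs_of_nonneg (by positivity : (0:ℝ) ≤ (a:ℝ))]
        have h2 : |(t : ℝ)| < |(k₂ : ℝ)| + 1 := by
          have hb0 : (0 : ℝ) < (b : ℝ) := by linarith
          have h3 : |(t : ℝ)| * (b : ℝ) < (|(k₂ : ℝ)| + 1) * (b : ℝ) := by nlinarith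
          exact lt_of_mul_lt_mul_right h3 (le_of_lt hb0)
        have h4 : |t| < |k₂| + 1 := by
          have := h2
          rw [← Int.cast_abs, ← Int.cast_abs] at this
          exact_mod_cast this
        have h5 : |t| ≤ |k₂| := by omega
        rw [← Int.cast_abs, ← Int.cast_abs]
        exact_mod_cast h5
      have hquadR : (1:ℝ) ≤ |(k₂:ℝ)^2 - (t:ℝ)*(k₂:ℝ) - (t:ℝ)^2| := by
        have h0 : (k₂^2 - t*k₂ - t^2 : ℤ) ≠ 0 := by
          intro h
          apply quad_ne t k₂ ht0
          have := congrArg (fun z : ℤ => (z : ℝ)) h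
          push_cast at this
          linarith
        have h1 : (1:ℤ) ≤ |k₂^2 - t*k₂ - t^2| := Int.one_le_abs h0
        have h2 : ((|k₂^2 - t*k₂ - t^2| : ℤ) : ℝ) = |(k₂:ℝ)^2 - (t:ℝ)*(k₂:ℝ) - (t:ℝ)^2| := by
          rw [Int.cast_abs]; push_cast; ring_nf
        rw [← h2]; exact_mod_cast h1
      have hfac : ((t:ℝ)*φ - (k₂:ℝ)) * ((t:ℝ)*ψ - (k₂:ℝ)) = (k₂:ℝ)^2 - (t:ℝ)*(k₂:ℝ) - (t:ℝ)^2 := by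
        linear_combination ((t:ℝ)^2) * goldenRatio_mul_goldenConj + (-((t:ℝ)*(k₂:ℝ))) * goldenRatio_add_goldenConj
      have hψ1 : |ψ| < 1 := abs_lt.2 ⟨neg_one_lt_goldenConj, by linarith [goldenConj_neg]⟩
      have hfac2 : |(t:ℝ)*ψ - (k₂:ℝ)| ≤ 2 * |(k₂:ℝ)| := by
        calc |(t:ℝ)*ψ - (k₂:ℝ)| ≤ |(t:ℝ)*ψ| + |-(k₂:ℝ)| := by
              rw [sub_eq_add_neg]; exact abs_add_le _ _
          _ = |(t:ℝ)| * |ψ| + |(k₂:ℝ)| := by rw [abs_mul, abs_neg]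
          _ ≤ 2 * |(k₂:ℝ)| := by linarith [mul_le_mul habs (le_of_lt hψ1) (abs_nonneg ψ) (abs_nonneg (k₂:ℝ))]
      have hlow : (1:ℝ) ≤ |(t:ℝ)*φ - (k₂:ℝ)| * (2 * |(k₂:ℝ)|) := by
        have h0 : |(t:ℝ)*φ - (k₂:ℝ)| * |(t:ℝ)*ψ - (k₂:ℝ)| = |(k₂:ℝ)^2 - (t:ℝ)*(k₂:ℝ) - (t:ℝ)^2| := by
          rw [← abs_mul, hfac]
        calc (1:ℝ) ≤ |(k₂:ℝ)^2 - (t:ℝ)*(k₂:ℝ) - (t:ℝ)^2| := hquadR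
          _ = |(t:ℝ)*φ - (k₂:ℝ)| * |(t:ℝ)*ψ - (k₂:ℝ)| := h0.symm
          _ ≤ |(t:ℝ)*φ - (k₂:ℝ)| * (2 * |(k₂:ℝ)|) :=
              mul_le_mul_of_nonneg_left hfac2 (abs_nonneg _)
      have hgold : (a:ℝ) * φ = (b:ℝ) - ψ^(m+3) := fibb_golden (m+2)
      have hkey : (k₁:ℝ) * φ = (b:ℝ) * ((t:ℝ)*φ - (k₂:ℝ)) + ψ^(m+3) * (k₂:ℝ) := by
        linear_combination φ * htR - (k₂:ℝ) * hgold
      have hpsimul : |ψ| * φ = 1 := by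
        rw [abs_of_neg goldenConj_neg]; linarith [goldenConj_mul_goldenRatio]
      have hpsi : |ψ|^(m+3) * φ^(m+3) = 1 := by
        rw [← mul_pow, hpsimul, one_pow]
      have hψk : |ψ^(m+3) * (k₂:ℝ)| ≤ 1/5 := by
        rw [abs_mul, abs_pow]
        have hbphi : (b:ℝ) ≤ 2 * φ^(m+3) := fibb_le (m+3)
        have habs0 : (0:ℝ) ≤ |ψ|^(m+3) := by positivity
        calc |ψ|^(m+3) * |(k₂:ℝ)| ≤ |ψ|^(m+3) * ((b:ℝ)/10) :=
              mul_le_mul_of_nonneg_left hk2b habs0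
          _ ≤ |ψ|^(m+3) * (2*φ^(m+3)/10) :=
              mul_le_mul_of_nonneg_left (by linarith) habs0
          _ = (|ψ|^(m+3) * φ^(m+3))/5 := by ring
          _ = 1/5 := by rw [hpsi]
      have hbound : (b:ℝ) * |(t:ℝ)*φ - (k₂:ℝ)| ≤ |(k₁:ℝ)| * φ + 1/5 := by
        have e : (b:ℝ) * ((t:ℝ)*φ - (k₂:ℝ)) = (k₁:ℝ)*φ - ψ^(m+3)*(k₂:ℝ) := by
          linarith [hkey]
        calc (b:ℝ) * |(t:ℝ)*φ - (k₂:ℝ)| = |(b:ℝ) * ((t:ℝ)*φ - (k₂:ℝ))| := by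
              rw [abs_mul, abs_of_nonneg (by positivity : (0:ℝ) ≤ (b:ℝ))]
          _ = |(k₁:ℝ)*φ - ψ^(m+3)*(k₂:ℝ)| := by rw [e]
          _ ≤ |(k₁:ℝ)*φ| + |-(ψ^(m+3)*(k₂:ℝ))| := by
              rw [sub_eq_add_neg]; exact abs_add_le _ _
          _ ≤ |(k₁:ℝ)| * φ + 1/5 := by
              rw [abs_neg, abs_mul, abs_of_pos goldenRatio_pos]; linarith [hψk]
      have hfinal1 : (b:ℝ) ≤ (b:ℝ) * (|(t:ℝ)*φ - (k₂:ℝ)| * (2 * |(k₂:ℝ)|)) :=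
        le_mul_of_one_le_right (by linarith) hlow
      have hfinal2 : ((b:ℝ) * |(t:ℝ)*φ - (k₂:ℝ)|) * (2 * |(k₂:ℝ)|) ≤ (|(k₁:ℝ)| * φ + 1/5) * (2 * |(k₂:ℝ)|) :=
        mul_le_mul_of_nonneg_right hbound (by positivity)
      have hA : (b:ℝ) ≤ (|(k₁:ℝ)| * φ + 1/5) * (2 * |(k₂:ℝ)|) := by
        calc (b:ℝ) ≤ (b:ℝ) * (|(t:ℝ)*φ - (k₂:ℝ)| * (2 * |(k₂:ℝ)|)) := hfinal1
          _ = ((b:ℝ) * |(t:ℝ)*φ - (k₂:ℝ)|) * (2 * |(k₂:ℝ)|) := by ring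
          _ ≤ _ := hfinal2
      have p1 : φ * (|(k₁:ℝ)| * |(k₂:ℝ)|) ≤ φ * ((b:ℝ)/10) :=
        mul_le_mul_of_nonneg_left hP (le_of_lt goldenRatio_pos)
      have p2 : φ * ((b:ℝ)/10) ≤ 2 * ((b:ℝ)/10) :=
        mul_le_mul_of_nonneg_right (le_of_lt goldenRatio_lt_two) (by positivity)
      have hexp : (|(k₁:ℝ)| * φ + 1/5) * (2 * |(k₂:ℝ)|)
          = 2 * (φ * (|(k₁:ℝ)| * |(k₂:ℝ)|)) + (2/5) * |(k₂:ℝ)| := by ring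
      rw [hexp] at hA
      linarith [hA, p1, p2, hk2b, hbR]
  refine ⟨?_, hk2⟩
  rw [hk2, mul_zero, add_zero] at hdvd
  have hlt : |k₁| < (b : ℤ) := by
    have : |(k₁ : ℝ)| < (b : ℝ) := by linarith
    rw [← Int.cast_abs] at this
    exact_mod_cast this
  exact Int.eq_zero_of_abs_lt_dvd hdvd hlt


end
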